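/- arXiv:1805.11230 — 2 statements merged into one kernel-verified Lean document; each statement's English description precedes it below -/
import Mathlib

section
/- Suppose $x^T F(x) + \frac{\bar p - 1}{2}|G(x)|^2 \le K_2(1+|x|^2)$ for all $x \in \mathbb{R}^d$, where $\bar p > 2$, $K_2 > 0$. Let $\pi_\Delta(x) = (|x| \wedge R)\frac{x}{|x|}$ for some $R \ge 1$ (with $\pi_\Delta(0)=0$), and define $F_\Delta(x) = F(\pi_\Delta(x))$, $G_\Delta(x) = G(\pi_\Delta(x))$. Then $x^T F_\Delta(x) + \frac{\bar p - 1}{2}|G_\Delta(x)|^2 \le 2 K_2 (1 + |x|^2)$ for all $x \in \mathbb{R}^d$. -/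
theorem stmt_7 {d : ℕ} {M : Type*} [NormedAddCommGroup M]
    (F : EuclideanSpace ℝ (Fin d) → EuclideanSpace ℝ (Fin d))
    (G : EuclideanSpace ℝ (Fin d) → M)
    (pbar K₂ : ℝ) (hpbar : 2 < pbar) (hK₂ : 0 < K₂)
    (hKhas : ∀ x, (inner ℝ x (F x) : ℝ) + (pbar - 1) / 2 * ‖G x‖ ^ 2 ≤ K₂ * (1 + ‖x‖ ^ 2))
    (R : ℝ) (hR : 1 ≤ R)
    (πΔ : EuclideanSpace ℝ (Fin d) → EuclideanSpace ℝ (Fin d))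
    (hπ : ∀ x, πΔ x = (min ‖x‖ R) • (‖x‖⁻¹ • x)) :
    ∀ x, (inner ℝ x (F (πΔ x)) : ℝ) + (pbar - 1) / 2 * ‖G (πΔ x)‖ ^ 2
      ≤ 2 * K₂ * (1 + ‖x‖ ^ 2) := by
  intro x
  by_cases hle : ‖x‖ ≤ R
  · have hfix : πΔ x = x := by
      rcases eq_or_ne x 0 with h0 | h0
      · simp [hπ, h0]
      · have hx : (‖x‖ : ℝ) ≠ 0 := norm_ne_zero_iff.mpr h0
        rw [hπ, min_eq_left hle, smul_smul, mul_inv_cancel₀ hx, one_smul]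
    rw [hfix]
    have := hKhas x
    nlinarith [this, sq_nonneg ‖x‖]
  · push_neg at hle
    have ht : (0:ℝ) < ‖x‖ := lt_of_le_of_lt (le_trans zero_le_one hR) hle
    have hR0 : (0:ℝ) < R := lt_of_lt_of_le zero_lt_one hR
    set y := πΔ x with hy
    have hyx : y = (R / ‖x‖) • x := by
      rw [hy, hπ, min_eq_right hle.le, smul_smul, div_eq_mul_inv]
    have hxy : x = (‖x‖ / R) • y := by
      rw [hyx, smul_smul]
      field_simp
      rw [one_smul]
    have hny : ‖y‖ = R := by
      rw [hyx, norm_smul, Real.norm_eq_abs, abs_of_pos (by positivity)]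
      field_simp
    have hinner : (inner ℝ x (F y) : ℝ) = (‖x‖ / R) * (inner ℝ y (F y) : ℝ) := by
      conv_lhs => rw [hxy]
      exact real_inner_smul_left _ _ _
    have hs : (1:ℝ) ≤ ‖x‖ / R := (one_le_div hR0).2 hle.le
    have hG : (0:ℝ) ≤ (pbar - 1) / 2 * ‖G y‖ ^ 2 :=
      mul_nonneg (by linarith) (sq_nonneg _)
    have hKh := hKhas y
    rw [hny] at hKh
    have key : (inner ℝ x (F y) : ℝ) + (pbar - 1) / 2 * ‖G y‖ ^ 2
        ≤ (‖x‖ / R) * (K₂ * (1 + R ^ 2)) := by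
      rw [hinner]
      nlinarith [hKh, hG, hs]
    have h2 : (‖x‖ / R) * (K₂ * (1 + R ^ 2)) ≤ 2 * K₂ * (1 + ‖x‖ ^ 2) := by
      rw [div_mul_eq_mul_div, div_le_iff₀ hR0]
      nlinarith [mul_nonneg hK₂.le (mul_nonneg (mul_nonneg ht.le hR0.le) (sub_nonneg.2 hle.le)),
        mul_nonneg hK₂.le (mul_nonneg ht.le (sub_nonneg.2 (le_trans hR hle.le))),
        mul_nonneg (mul_nonneg hK₂.le (sq_nonneg ‖x‖)) (sub_nonneg.2 hR),
        mul_nonneg (mul_nonneg hK₂.le (sq_nonneg ‖x‖)) hR0.le,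
        mul_nonneg hK₂.le hR0.le]
    exact key.trans h2
end

section
/- Suppose $2x^T f(x) + |g(x)|^2 + \lambda(2x^T h(x) + |h(x)|^2) \le \bar K(1+|x|^2)$ for all $x \in \mathbb{R}^d$, where $\lambda, \bar K > 0$. Let $R \ge 1$, define $\pi(x) = (|x| \wedge R)\frac{x}{|x|}$ (with $\pi(0)=0$) and $f_\Delta = f \circ \pi$, $g_\Delta = g \circ \pi$, $h_\Delta = h \circ \pi$. Then $2x^T f_\Delta(x) + |g_\Delta(x)|^2 + \lambda(2x^T h_\Delta(x) + |h_\Delta(x)|^2) \le 2\bar K(1+|x|^2)$ for all $x \in \mathbb{R}^d$. -/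
theorem stmt_8 {d : ℕ} {M : Type*} [NormedAddCommGroup M]
    (f h : EuclideanSpace ℝ (Fin d) → EuclideanSpace ℝ (Fin d))
    (g : EuclideanSpace ℝ (Fin d) → M)
    (lam Kbar : ℝ) (hlam : 0 < lam) (hKbar : 0 < Kbar)
    (hKhas : ∀ x, 2 * (inner ℝ x (f x) : ℝ) + ‖g x‖ ^ 2
      + lam * (2 * (inner ℝ x (h x) : ℝ) + ‖h x‖ ^ 2) ≤ Kbar * (1 + ‖x‖ ^ 2))
    (R : ℝ) (hR : 1 ≤ R)
    (π : EuclideanSpace ℝ (Fin d) → EuclideanSpace ℝ (Fin d))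
    (hπ : ∀ x, π x = (min ‖x‖ R) • (‖x‖⁻¹ • x)) :
    ∀ x, 2 * (inner ℝ x (f (π x)) : ℝ) + ‖g (π x)‖ ^ 2
      + lam * (2 * (inner ℝ x (h (π x)) : ℝ) + ‖h (π x)‖ ^ 2)
      ≤ 2 * Kbar * (1 + ‖x‖ ^ 2) := by
  intro x
  by_cases hle : ‖x‖ ≤ R
  · have hπx : π x = x := by
      rw [hπ x, min_eq_left hle, smul_smul]
      rcases eq_or_ne x 0 with h0 | h0
      · simp [h0]
      · rw [mul_inv_cancel₀ (norm_ne_zero_iff.mpr h0), one_smul]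
    rw [hπx]
    have hK := hKhas x
    nlinarith [norm_nonneg x, sq_nonneg ‖x‖]
  · push_neg at hle
    have hRpos : (0:ℝ) < R := lt_of_lt_of_le zero_lt_one hR
    have hxpos : 0 < ‖x‖ := lt_trans hRpos hle
    have hπx : π x = (R / ‖x‖) • x := by
      rw [hπ x, min_eq_right hle.le, smul_smul, div_eq_mul_inv]
    set y := π x with hy
    have hxy : x = (‖x‖ / R) • y := by
      rw [hπx, smul_smul]
      rw [div_mul_div_comm, mul_comm, div_self (by positivity), one_smul]
    have hny : ‖y‖ = R := by
      rw [hπx, norm_smul, Real.norm_eq_abs, abs_of_pos (by positivity)]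
      field_simp
    set a := ‖x‖ / R with ha
    have ha1 : 1 ≤ a := (one_le_div hRpos).mpr hle.le
    have hiF : (inner ℝ x (f y) : ℝ) = a * inner ℝ y (f y) := by
      conv_lhs => rw [hxy]
      exact real_inner_smul_left y (f y) a
    have hiH : (inner ℝ x (h y) : ℝ) = a * inner ℝ y (h y) := by
      conv_lhs => rw [hxy]
      exact real_inner_smul_left y (h y) a
    have hK := hKhas y
    rw [hny] at hK
    have hxa : ‖x‖ = a * R := by rw [ha, div_mul_cancel₀ _ hRpos.ne']
    rw [hiF, hiH, hxa]
    have hgn : (0:ℝ) ≤ ‖g y‖ ^ 2 := sq_nonneg _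
    have hhn : (0:ℝ) ≤ ‖h y‖ ^ 2 := sq_nonneg _
    have haK : a * (2 * (inner ℝ y (f y) : ℝ) + ‖g y‖ ^ 2
        + lam * (2 * (inner ℝ y (h y) : ℝ) + ‖h y‖ ^ 2)) ≤ a * (Kbar * (1 + R ^ 2)) :=
      mul_le_mul_of_nonneg_left hK (by linarith)
    have step1 : 2 * (a * (inner ℝ y (f y) : ℝ)) + ‖g y‖ ^ 2
        + lam * (2 * (a * (inner ℝ y (h y) : ℝ)) + ‖h y‖ ^ 2)
        ≤ a * (Kbar * (1 + R ^ 2)) := by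
      nlinarith [mul_nonneg (sub_nonneg.mpr ha1) hgn,
        mul_nonneg (sub_nonneg.mpr ha1) (mul_nonneg hlam.le hhn)]
    have h1 : 0 ≤ Kbar * (a * (a * R ^ 2 - 1)) :=
      mul_nonneg hKbar.le (mul_nonneg (by linarith) (by nlinarith))
    have h2 : 0 ≤ Kbar * (a * R ^ 2 * (a - 1)) :=
      mul_nonneg hKbar.le (mul_nonneg (by nlinarith) (by linarith))
    clear_value y a
    have step2 : a * (Kbar * (1 + R ^ 2)) ≤ 2 * Kbar * (1 + (a * R) ^ 2) := by
      nlinarith [h1, h2, hKbar]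
    linarith [step1, step2]
end
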